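/- Let a, b, c ∈ ℤ with 0 ≤ a < m, 0 ≤ b ≤ q and c ≥ 0, and set k := a + m(b + (q+1)c). Then k ≥ 1 and m(q+1)·((q−1)·⌈k/(m(q+1))⌉ + q(q−1)·⌈k/m⌉) > q³·k if and only if exactly one of the following two conditions holds: (i) a = 0, 0 < b ≤ q−1 and 0 ≤ c ≤ q−1−b; (ii) 0 < a < m, 0 ≤ b ≤ q, 0 ≤ c ≤ q²−1−b+⌊b/(q+1) − q³a/(m(q+1))⌋ and b − ⌊b/(q+1) − q³a/(m(q+1))⌋ ≤ q²−1. (Here the condition k ≥ 1 excludes a + mb = 0 together with c = 0; when a + mb = 0 and c > 0 the inequality fails.) -/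

import Mathlib

private lemma ceil_div_int' (x d v : ℤ) (hd : 0 < d)
    (h1 : (v - 1) * d < x) (h2 : x ≤ v * d) :
    ⌈(x : ℚ) / (d : ℚ)⌉ = v := by
  have hd' : (0:ℚ) < (d:ℚ) := by exact_mod_cast hd
  rw [Int.ceil_eq_iff]
  exact ⟨by rw [lt_div_iff₀ hd']; exact_mod_cast h1,
         by rw [div_le_iff₀ hd']; exact_mod_cast h2⟩

private lemma pos_T_iff (Q b c : ℤ) (hQ : 2 ≤ Q) (hb : 0 < b) (hbq : b ≤ Q) (hc : 0 ≤ c) :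
    0 < (Q + 1) * (Q - 1 - c) - Q * b ↔ b ≤ Q - 1 ∧ c ≤ Q - 1 - b := by
  constructor
  · intro h
    constructor
    · nlinarith
    · nlinarith
  · rintro ⟨h1, h2⟩
    nlinarith

private lemma floor_bound_iff (M F x e cc : ℤ) (hM : 0 < M) (hF1 : F * M ≤ x)
    (hF2 : x < (F + 1) * M) (hne : F * M ≠ x) :
    0 < (e - cc) * M + x ↔ cc ≤ e + F := by
  constructor
  · intro h
    by_contra hcc
    push_neg at hcc
    have h1 : e - cc ≤ -(F + 1) := by linarith
    have h2 : (e - cc) * M ≤ -(F + 1) * M := mul_le_mul_of_nonneg_right h1 hM.le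
    have h3 : -(F + 1) * M = -((F + 1) * M) := by ring
    linarith
  · intro h
    have h1 : -F ≤ e - cc := by linarith
    have h2 : -F * M ≤ (e - cc) * M := mul_le_mul_of_nonneg_right h1 hM.le
    have h3 : -F * M = -(F * M) := by ring
    have h4 : F * M < x := lt_of_le_of_ne hF1 hne
    linarith

/-- Characterization of the Weierstrass gaps at `P₀`: for `k = a + m(b + (q+1)c)` with
`0 ≤ a < m`, `0 ≤ b ≤ q`, `c ≥ 0`, one has `k ≥ 1` and
`m(q+1)((q-1)⌈k/(m(q+1))⌉ + q(q-1)⌈k/m⌉) > q³ k` iff exactly one of the conditions (i),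
(ii) holds. -/
theorem gap_at_P0 (q n : ℕ) (hq : IsPrimePow q) (hn : Odd n) (hn1 : 1 < n)
    (m : ℤ) (hm : m * ((q : ℤ) + 1) = (q : ℤ) ^ n + 1)
    (a b c : ℤ) (ha0 : 0 ≤ a) (ham : a < m) (hb0 : 0 ≤ b) (hbq : b ≤ (q : ℤ)) (hc0 : 0 ≤ c) :
    (1 ≤ a + m * (b + ((q : ℤ) + 1) * c) ∧
        (q : ℤ) ^ 3 * (a + m * (b + ((q : ℤ) + 1) * c)) <
          m * ((q : ℤ) + 1) *
            (((q : ℤ) - 1) * ⌈((a + m * (b + ((q : ℤ) + 1) * c) : ℤ) : ℚ)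
                / ((m * ((q : ℤ) + 1) : ℤ) : ℚ)⌉
              + (q : ℤ) * ((q : ℤ) - 1) * ⌈((a + m * (b + ((q : ℤ) + 1) * c) : ℤ) : ℚ)
                / ((m : ℤ) : ℚ)⌉)) ↔
      Xor'
        (a = 0 ∧ 0 < b ∧ b ≤ (q : ℤ) - 1 ∧ 0 ≤ c ∧ c ≤ (q : ℤ) - 1 - b)
        (0 < a ∧ a < m ∧ 0 ≤ b ∧ b ≤ (q : ℤ) ∧ 0 ≤ c ∧
          c ≤ (q : ℤ) ^ 2 - 1 - b +
              ⌊((b : ℤ) : ℚ) / ((q : ℚ) + 1)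
                - (((q : ℤ) ^ 3 * a : ℤ) : ℚ) / ((m * ((q : ℤ) + 1) : ℤ) : ℚ)⌋ ∧
          b - ⌊((b : ℤ) : ℚ) / ((q : ℚ) + 1)
                - (((q : ℤ) ^ 3 * a : ℤ) : ℚ) / ((m * ((q : ℤ) + 1) : ℤ) : ℚ)⌋
            ≤ (q : ℤ) ^ 2 - 1) := by
  have hQ2 : (2:ℤ) ≤ (q:ℤ) := by exact_mod_cast hq.two_le
  have hm0 : 0 < m := lt_of_le_of_lt ha0 ham
  have hM0 : 0 < m * ((q:ℤ)+1) := mul_pos hm0 (by linarith)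
  have hq1c : (0:ℤ) ≤ ((q:ℤ)+1) * c := mul_nonneg (by linarith) hc0
  have hcop : IsCoprime ((q:ℤ)^3) m := by
    have h1 : IsCoprime ((q:ℤ)) ((q:ℤ)^n + 1) := by
      obtain ⟨n', rfl⟩ : ∃ n', n = n' + 1 := ⟨n - 1, by omega⟩
      exact ⟨-(q:ℤ)^n', 1, by ring⟩
    exact (h1.of_isCoprime_of_dvd_right ⟨(q:ℤ)+1, hm.symm⟩).pow_left
  rcases ha0.eq_or_lt with h0 | ha
  · -- a = 0
    subst h0
    have hP2 : ¬ ((0:ℤ) < 0 ∧ (0:ℤ) < m ∧ 0 ≤ b ∧ b ≤ (q : ℤ) ∧ 0 ≤ c ∧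
        c ≤ (q : ℤ) ^ 2 - 1 - b +
            ⌊((b : ℤ) : ℚ) / ((q : ℚ) + 1)
              - (((q : ℤ) ^ 3 * 0 : ℤ) : ℚ) / ((m * ((q : ℤ) + 1) : ℤ) : ℚ)⌋ ∧
        b - ⌊((b : ℤ) : ℚ) / ((q : ℚ) + 1)
              - (((q : ℤ) ^ 3 * 0 : ℤ) : ℚ) / ((m * ((q : ℤ) + 1) : ℤ) : ℚ)⌋
          ≤ (q : ℤ) ^ 2 - 1) := fun h => absurd h.1 (lt_irrefl 0)
    rcases hb0.eq_or_lt with hb | hb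
    · -- b = 0
      subst hb
      have hP1 : ¬ ((0:ℤ) = 0 ∧ (0:ℤ) < 0 ∧ (0:ℤ) ≤ (q : ℤ) - 1 ∧ 0 ≤ c ∧
          c ≤ (q : ℤ) - 1 - 0) := fun h => absurd h.2.1 (lt_irrefl 0)
      have hLHS : ¬ ((1 : ℤ) ≤ 0 + m * (0 + ((q : ℤ) + 1) * c) ∧
          (q : ℤ) ^ 3 * (0 + m * (0 + ((q : ℤ) + 1) * c)) <
            m * ((q : ℤ) + 1) *
              (((q : ℤ) - 1) * ⌈((0 + m * (0 + ((q : ℤ) + 1) * c) : ℤ) : ℚ)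
                  / ((m * ((q : ℤ) + 1) : ℤ) : ℚ)⌉
                + (q : ℤ) * ((q : ℤ) - 1) * ⌈((0 + m * (0 + ((q : ℤ) + 1) * c) : ℤ) : ℚ)
                  / ((m : ℤ) : ℚ)⌉)) := by
        rcases hc0.eq_or_lt with hc | hc
        · subst hc
          rintro ⟨h1, -⟩
          simp at h1
        · have e1 : ⌈((0 + m * (0 + ((q : ℤ) + 1) * c) : ℤ) : ℚ)
              / ((m * ((q : ℤ) + 1) : ℤ) : ℚ)⌉ = c := by
            apply ceil_div_int' _ _ _ hM0
            · have hid : (0 + m * (0 + ((q : ℤ) + 1) * c)) - (c - 1) * (m * ((q:ℤ)+1))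
                  = m * ((q:ℤ)+1) := by ring
              linarith
            · have hid : c * (m * ((q:ℤ)+1)) - (0 + m * (0 + ((q : ℤ) + 1) * c)) = 0 := by
                ring
              linarith
          have e2 : ⌈((0 + m * (0 + ((q : ℤ) + 1) * c) : ℤ) : ℚ) / ((m : ℤ) : ℚ)⌉
              = ((q:ℤ)+1) * c := by
            apply ceil_div_int' _ _ _ hm0
            · have hid : (0 + m * (0 + ((q : ℤ) + 1) * c)) - (((q:ℤ)+1) * c - 1) * m
                  = m := by ring
              linarith
            · have hid : ((q:ℤ)+1) * c * m - (0 + m * (0 + ((q : ℤ) + 1) * c)) = 0 := by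
                ring
              linarith
          rw [e1, e2]
          rintro ⟨-, h2⟩
          have key : m * ((q : ℤ) + 1) * (((q : ℤ) - 1) * c
              + (q : ℤ) * ((q : ℤ) - 1) * (((q:ℤ)+1) * c)) -
              (q : ℤ) ^ 3 * (0 + m * (0 + ((q : ℤ) + 1) * c))
              = -(m * (((q:ℤ)+1) * c)) := by ring
          have hpos : 0 < m * (((q:ℤ)+1) * c) :=
            mul_pos hm0 (mul_pos (by linarith) hc)
          linarith
      simp only [Xor']
      exact iff_of_false hLHS (fun h => h.elim (fun h => absurd h.1.2.1 (lt_irrefl 0))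
        (fun h => absurd h.1.1 (lt_irrefl 0)))
    · -- b > 0
      have e1 : ⌈((0 + m * (b + ((q : ℤ) + 1) * c) : ℤ) : ℚ)
          / ((m * ((q : ℤ) + 1) : ℤ) : ℚ)⌉ = c + 1 := by
        apply ceil_div_int' _ _ _ hM0
        · have hid : (0 + m * (b + ((q : ℤ) + 1) * c)) - (c + 1 - 1) * (m * ((q:ℤ)+1))
              = m * b := by ring
          have := mul_pos hm0 hb
          linarith
        · have hid : (c + 1) * (m * ((q:ℤ)+1)) - (0 + m * (b + ((q : ℤ) + 1) * c))
              = m * ((q:ℤ) + 1 - b) := by ring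
          have := mul_nonneg hm0.le (show (0:ℤ) ≤ (q:ℤ) + 1 - b by linarith)
          linarith
      have e2 : ⌈((0 + m * (b + ((q : ℤ) + 1) * c) : ℤ) : ℚ) / ((m : ℤ) : ℚ)⌉
          = b + ((q:ℤ)+1) * c := by
        apply ceil_div_int' _ _ _ hm0
        · have hid : (0 + m * (b + ((q : ℤ) + 1) * c)) - (b + ((q:ℤ)+1) * c - 1) * m
              = m := by ring
          linarith
        · have hid : (b + ((q:ℤ)+1) * c) * m - (0 + m * (b + ((q : ℤ) + 1) * c)) = 0 := by
            ring
          linarith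
      rw [e1, e2]
      have hk1 : (1:ℤ) ≤ 0 + m * (b + ((q : ℤ) + 1) * c) := by
        have h1 : (1:ℤ) ≤ b + ((q:ℤ)+1) * c := by linarith
        have h2 : m * 1 ≤ m * (b + ((q:ℤ)+1) * c) := mul_le_mul_of_nonneg_left h1 hm0.le
        linarith
      have key : m * ((q : ℤ) + 1) * (((q : ℤ) - 1) * (c + 1)
          + (q : ℤ) * ((q : ℤ) - 1) * (b + ((q:ℤ)+1) * c)) -
          (q : ℤ) ^ 3 * (0 + m * (b + ((q : ℤ) + 1) * c))
          = m * (((q:ℤ)+1) * ((q:ℤ)-1-c) - (q:ℤ) * b) := by ring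
      have hineq : ((q : ℤ) ^ 3 * (0 + m * (b + ((q : ℤ) + 1) * c)) <
          m * ((q : ℤ) + 1) * (((q : ℤ) - 1) * (c + 1)
            + (q : ℤ) * ((q : ℤ) - 1) * (b + ((q:ℤ)+1) * c)))
          ↔ (b ≤ (q:ℤ) - 1 ∧ c ≤ (q:ℤ) - 1 - b) := by
        rw [← pos_T_iff (q:ℤ) b c hQ2 hb hbq hc0]
        constructor
        · intro h
          have hmT : 0 < m * (((q:ℤ)+1) * ((q:ℤ)-1-c) - (q:ℤ) * b) := by linarith
          by_contra hT
          push_neg at hT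
          have := mul_nonpos_of_nonneg_of_nonpos hm0.le hT
          linarith
        · intro h
          have := mul_pos hm0 h
          linarith
      rw [hineq]
      simp only [Xor']
      constructor
      · rintro ⟨-, h1, h2⟩
        exact Or.inl ⟨⟨by trivial, hb, h1, hc0, h2⟩, hP2⟩
      · rintro (⟨⟨-, -, h1, -, h2⟩, -⟩ | ⟨h, -⟩)
        · exact ⟨hk1, h1, h2⟩
        · exact absurd h hP2
  · -- a > 0
    have hP1 : ¬ (a = 0 ∧ 0 < b ∧ b ≤ (q : ℤ) - 1 ∧ 0 ≤ c ∧ c ≤ (q : ℤ) - 1 - b) :=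
      fun h => absurd h.1 (ne_of_gt ha)
    have e1 : ⌈((a + m * (b + ((q : ℤ) + 1) * c) : ℤ) : ℚ)
        / ((m * ((q : ℤ) + 1) : ℤ) : ℚ)⌉ = c + 1 := by
      apply ceil_div_int' _ _ _ hM0
      · have hid : (a + m * (b + ((q : ℤ) + 1) * c)) - (c + 1 - 1) * (m * ((q:ℤ)+1))
            = a + m * b := by ring
        have := mul_nonneg hm0.le hb0
        linarith
      · have hid : (c + 1) * (m * ((q:ℤ)+1)) - (a + m * (b + ((q : ℤ) + 1) * c))
            = m * ((q:ℤ) + 1 - b) - a := by ring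
        have h2 : m * 1 ≤ m * ((q:ℤ) + 1 - b) :=
          mul_le_mul_of_nonneg_left (by linarith) hm0.le
        linarith
    have e2 : ⌈((a + m * (b + ((q : ℤ) + 1) * c) : ℤ) : ℚ) / ((m : ℤ) : ℚ)⌉
        = b + ((q:ℤ)+1) * c + 1 := by
      apply ceil_div_int' _ _ _ hm0
      · have hid : (a + m * (b + ((q : ℤ) + 1) * c)) - (b + ((q:ℤ)+1) * c + 1 - 1) * m
            = a := by ring
        linarith
      · have hid : (b + ((q:ℤ)+1) * c + 1) * m - (a + m * (b + ((q : ℤ) + 1) * c))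
            = m - a := by ring
        linarith
    rw [e1, e2]
    set x : ℤ := b * m - (q:ℤ)^3 * a with hx
    have hfl : ⌊((b : ℤ) : ℚ) / ((q : ℚ) + 1)
        - (((q : ℤ) ^ 3 * a : ℤ) : ℚ) / ((m * ((q : ℤ) + 1) : ℤ) : ℚ)⌋
        = ⌊(x : ℚ) / ((m * ((q : ℤ) + 1) : ℤ) : ℚ)⌋ := by
      congr 1
      have hq0 : ((q:ℚ) + 1) ≠ 0 := by positivity
      have hm0' : ((m:ℚ)) ≠ 0 := by exact_mod_cast hm0.ne'
      push_cast [hx]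
      field_simp
    rw [hfl]
    set F : ℤ := ⌊(x : ℚ) / ((m * ((q : ℤ) + 1) : ℤ) : ℚ)⌋ with hF
    have hM0' : (0:ℚ) < ((m * ((q : ℤ) + 1) : ℤ) : ℚ) := by exact_mod_cast hM0
    have hF1 : F * (m * ((q:ℤ)+1)) ≤ x := by
      have h := Int.floor_le ((x : ℚ) / ((m * ((q : ℤ) + 1) : ℤ) : ℚ))
      rw [le_div_iff₀ hM0'] at h
      rw [← hF] at h
      exact_mod_cast h
    have hF2 : x < (F + 1) * (m * ((q:ℤ)+1)) := by
      have h := Int.lt_floor_add_one ((x : ℚ) / ((m * ((q : ℤ) + 1) : ℤ) : ℚ))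
      rw [div_lt_iff₀ hM0'] at h
      rw [← hF] at h
      exact_mod_cast h
    have hFne : F * (m * ((q:ℤ)+1)) ≠ x := by
      intro hxe
      have hdvd : m ∣ (q:ℤ)^3 * a := by
        have h1 : m ∣ x := ⟨F * ((q:ℤ)+1), by rw [← hxe]; ring⟩
        have hb' : m ∣ b * m := ⟨b, mul_comm b m⟩
        have h2 := dvd_sub hb' h1
        rw [hx] at h2
        simpa using h2
      have hma : m ∣ a := (hcop.symm).dvd_of_dvd_mul_left hdvd
      have := Int.le_of_dvd ha hma
      linarith
    have hk1 : (1:ℤ) ≤ a + m * (b + ((q : ℤ) + 1) * c) := by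
      have := mul_nonneg hm0.le (show (0:ℤ) ≤ b + ((q:ℤ)+1) * c by linarith)
      linarith
    have key : m * ((q : ℤ) + 1) * (((q : ℤ) - 1) * (c + 1)
        + (q : ℤ) * ((q : ℤ) - 1) * (b + ((q:ℤ)+1) * c + 1)) -
        (q : ℤ) ^ 3 * (a + m * (b + ((q : ℤ) + 1) * c))
        = ((q:ℤ)^2 - 1 - b - c) * (m * ((q:ℤ)+1)) + x := by
      rw [hx]; ring
    have hineq : ((q : ℤ) ^ 3 * (a + m * (b + ((q : ℤ) + 1) * c)) <
        m * ((q : ℤ) + 1) * (((q : ℤ) - 1) * (c + 1)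
          + (q : ℤ) * ((q : ℤ) - 1) * (b + ((q:ℤ)+1) * c + 1)))
        ↔ c ≤ (q:ℤ)^2 - 1 - b + F := by
      rw [← floor_bound_iff (m * ((q:ℤ)+1)) F x ((q:ℤ)^2 - 1 - b) c hM0 hF1 hF2 hFne]
      constructor
      · intro h
        linarith
      · intro h
        linarith
    rw [hineq]
    simp only [Xor']
    constructor
    · rintro ⟨-, h⟩
      exact Or.inr ⟨⟨ha, ham, hb0, hbq, hc0, h, by linarith⟩, hP1⟩
    · rintro (⟨h, -⟩ | ⟨⟨-, -, -, -, -, h, -⟩, -⟩)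
      · exact absurd h hP1
      · exact ⟨hk1, h⟩
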